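/- arXiv:math/0603258 — 4 statements merged into one kernel-verified Lean document; each statement's English description precedes it below -/
import Mathlib

section
/- Let α > 0 and let Z(x) = e^{-αx} (real exponential decay). For every real s > 0, lim_{ε→0⁺} Im ∫₀^∞ e^{-αx}/((-s + iε) + x) dx = −π e^{-αs}. -/
open MeasureTheory Set Complex Filter

theorem im_boundary_value_exp (α : ℝ) (hα : 0 < α) (s : ℝ) (hs : 0 < s) :
    Tendsto (fun ε : ℝ =>
        (∫ x in Ioi (0:ℝ), Complex.exp (-(α:ℂ) * x) / ((-(s:ℂ) + ε * Complex.I) + x)).im)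
      (nhdsWithin 0 (Ioi 0))
      (nhds (-Real.pi * Real.exp (-α * s))) := by
  have hπ : (0:ℝ) < Real.pi := Real.pi_pos
  set g : ℝ → ℝ := fun x => Real.exp (-α * x) with hg_def
  set φ : ℝ → ℝ → ℝ := fun ε x => Real.pi⁻¹ * (ε / ((x - s)^2 + ε^2)) with hφ_def
  have hg_int : IntegrableOn g (Ioi 0) := exp_neg_integrableOn_Ioi 0 hα
  have key : Tendsto (fun ε => ∫ x in Ioi (0:ℝ), φ ε x • g x) (nhdsWithin 0 (Ioi 0))
      (nhds (g s)) := by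
    apply tendsto_setIntegral_peak_smul_of_integrableOn_of_tendsto
      (t := Ioo 0 (2*s)) (x₀ := s) measurableSet_Ioi measurableSet_Ioo Ioo_subset_Ioi_self
    · exact mem_nhdsWithin_of_mem_nhds (isOpen_Ioo.mem_nhds ⟨hs, by linarith⟩)
    · exact (measure_Ioo_lt_top).ne
    · filter_upwards [self_mem_nhdsWithin] with ε (hε : (0:ℝ) < ε)
      intro x _
      positivity
    · intro u hu hsu
      obtain ⟨δ, hδ, hball⟩ := Metric.isOpen_iff.1 hu s hsu
      rw [Metric.tendstoUniformlyOn_iff]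
      intro b hb
      have hmem : Ioo (0:ℝ) (b * Real.pi * δ^2) ∈ nhdsWithin 0 (Ioi 0) :=
        Ioo_mem_nhdsGT_of_mem ⟨le_rfl, by positivity⟩
      filter_upwards [hmem] with ε hε x hx
      have hε0 : 0 < ε := hε.1
      have hxs : δ ≤ |x - s| := by
        have : x ∉ Metric.ball s δ := fun h => hx.2 (hball h)
        simpa [Real.dist_eq, not_lt] using this
      have hδ2 : δ^2 ≤ (x - s)^2 + ε^2 := by
        nlinarith [_root_.sq_abs (x - s), sq_nonneg ε]
      have h1 : φ ε x ≤ Real.pi⁻¹ * (ε / δ^2) := by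
        apply mul_le_mul_of_nonneg_left _ (by positivity)
        exact div_le_div_of_nonneg_left hε0.le (by positivity) hδ2
      have h2 : Real.pi⁻¹ * (ε / δ^2) < b := by
        rw [inv_mul_lt_iff₀ hπ, div_lt_iff₀ (by positivity)]
        nlinarith [hε.2]
      have : φ ε x ≤ Real.pi⁻¹ * (ε / δ^2) := h1
      rw [dist_comm, Real.dist_eq]
      have hφnn : 0 ≤ φ ε x := by positivity
      calc |φ ε x - 0| = φ ε x := by rw [sub_zero, _root_.abs_of_nonneg hφnn]
      _ ≤ Real.pi⁻¹ * (ε / δ^2) := h1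
      _ < b := h2
    · -- integral over Ioo 0 (2s) tends to 1
      have hcalc : ∀ ε : ℝ, 0 < ε →
          ∫ x in Ioo (0:ℝ) (2*s), φ ε x = Real.pi⁻¹ * (2 * Real.arctan (s / ε)) := by
        intro ε hε
        have h0 : (0:ℝ) ≤ 2 * s := by linarith
        rw [← integral_Ioc_eq_integral_Ioo, ← intervalIntegral.integral_of_le h0]
        have hderiv : ∀ x ∈ uIcc (0:ℝ) (2*s),
            HasDerivAt (fun x => Real.pi⁻¹ * Real.arctan ((x - s) / ε)) (φ ε x) x := by
          intro x _
          have h1 : HasDerivAt (fun x : ℝ => (x - s) / ε) (1 / ε) x := by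
            simpa using ((hasDerivAt_id x).sub_const s).div_const ε
          have h2 := (Real.hasDerivAt_arctan ((x - s) / ε)).comp x h1
          have h3 := h2.const_mul Real.pi⁻¹
          refine h3.congr_deriv ?_
          have hε' : ε ≠ 0 := hε.ne'
          simp only [hφ_def]
          field_simp
          ring
        have hcont : Continuous (φ ε) := by
          apply continuous_const.mul
          exact continuous_const.div (by fun_prop) (fun x => by positivity)
        rw [intervalIntegral.integral_eq_sub_of_hasDerivAt hderiv
          (hcont.intervalIntegrable _ _)]
        have : (2 * s - s) / ε = s / ε := by ring_nf
        rw [this]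
        rw [show (0:ℝ) - s = -s by ring, show (-s)/ε = -(s/ε) by ring, Real.arctan_neg]
        ring
      have hlim : Tendsto (fun ε => Real.pi⁻¹ * (2 * Real.arctan (s / ε)))
          (nhdsWithin 0 (Ioi 0)) (nhds 1) := by
        have h1 : Tendsto (fun ε : ℝ => s / ε) (nhdsWithin 0 (Ioi 0)) atTop := by
          simpa [div_eq_mul_inv] using tendsto_inv_nhdsGT_zero.const_mul_atTop hs
        have h2 : Tendsto (fun ε : ℝ => Real.arctan (s / ε)) (nhdsWithin 0 (Ioi 0))
            (nhds (Real.pi / 2)) :=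
          (tendsto_nhds_of_tendsto_nhdsWithin Real.tendsto_arctan_atTop).comp h1
        have h3 := (h2.const_mul (2:ℝ)).const_mul Real.pi⁻¹
        convert h3 using 2
        field_simp
      apply hlim.congr'
      filter_upwards [self_mem_nhdsWithin] with ε (hε : (0:ℝ) < ε)
      exact (hcalc ε hε).symm
    · filter_upwards [self_mem_nhdsWithin] with ε (hε : (0:ℝ) < ε)
      exact ((continuous_const.mul (continuous_const.div (by fun_prop)
        (fun x => by positivity))).aestronglyMeasurable).restrict
    · exact hg_int
    · exact ((Real.continuous_exp.comp (by fun_prop)).tendsto s).mono_left nhdsWithin_le_nhds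
  have final := key.const_mul (-Real.pi)
  rw [show -Real.pi * g s = -Real.pi * Real.exp (-α * s) from rfl] at final
  apply final.congr'
  filter_upwards [self_mem_nhdsWithin] with ε (hε : (0:ℝ) < ε)
  -- show -π * ∫ φ • g = (∫ f).im
  have hne : ∀ x : ℝ, ((-(s:ℂ) + ε * Complex.I) + x) ≠ 0 := by
    intro x h
    have := congrArg Complex.im h
    simp at this
    exact hε.ne' this
  have hfint : IntegrableOn (fun x : ℝ =>
      Complex.exp (-(α:ℂ) * x) / ((-(s:ℂ) + ε * Complex.I) + x)) (Ioi 0) := by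
    apply Integrable.mono' (hg_int.mul_const ε⁻¹)
    · apply Continuous.aestronglyMeasurable
      exact Continuous.div (by fun_prop) (by fun_prop) hne
    · filter_upwards with x
      rw [norm_div]
      have h1 : ε ≤ ‖(-(s:ℂ) + ε * Complex.I) + x‖ := by
        have := Complex.abs_im_le_norm ((-(s:ℂ) + ε * Complex.I) + x)
        simpa [abs_of_pos hε] using this
      have h2 : ‖Complex.exp (-(α:ℂ) * x)‖ = g x := by
        simp [Complex.norm_exp, hg_def]
      rw [h2, hg_def]
      calc Real.exp (-α * x) / ‖(-(s:ℂ) + ε * Complex.I) + x‖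
          ≤ Real.exp (-α * x) / ε :=
            div_le_div_of_nonneg_left (Real.exp_pos _).le hε h1
        _ = Real.exp (-α * x) * ε⁻¹ := by rw [div_eq_mul_inv]
  have hint_im := integral_im (𝕜 := ℂ) hfint
  simp only [RCLike.im_to_complex] at hint_im
  rw [← hint_im, ← integral_const_mul]
  apply setIntegral_congr_fun measurableSet_Ioi
  intro x _
  have him : (Complex.exp (-(α:ℂ) * x) / ((-(s:ℂ) + ε * Complex.I) + x)).im =
      -(g x * ε / ((x - s)^2 + ε^2)) := by
    rw [show -(α:ℂ) * x = ((-α * x : ℝ) : ℂ) by push_cast; ring, ← Complex.ofReal_exp]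
    rw [Complex.div_im]
    simp only [Complex.ofReal_im, Complex.ofReal_re, Complex.add_im, Complex.add_re,
      Complex.neg_re, Complex.neg_im, Complex.mul_im, Complex.mul_re, Complex.I_re,
      Complex.I_im, Complex.normSq_apply, hg_def]
    ring_nf
  dsimp only
  rw [him, smul_eq_mul, hφ_def]
  have hden : (x - s)^2 + ε^2 ≠ 0 := by positivity
  field_simp
end

section
/- Let Z(x) = Σ_{k=1}^l γ_k e^{λ_k x} with Re λ_k < 0 and γ_k ∈ ℂ for all k. Then the function r(p) = ∫₀^∞ Z(x)/(p + x) dx is holomorphic on ℂ ∖ (-∞, 0], and for every s > 0 the nontangential boundary jump satisfies r(-s + i0) - r(-s - i0) = -2πi Z(s), i.e. lim_{ε→0⁺}[r(-s+iε) - r(-s-iε)] = -2πi Z(s). -/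
open MeasureTheory Set Complex Filter

theorem exp_sum_stieltjes_holomorphic_and_jump (l : ℕ) (γ lam : Fin l → ℂ)
    (hre : ∀ k, (lam k).re < 0)
    (Z : ℝ → ℂ) (hZ : ∀ x : ℝ, Z x = ∑ k, γ k * Complex.exp (lam k * x)) :
    DifferentiableOn ℂ
      (fun p : ℂ => ∫ x in Ioi (0:ℝ), Z x / (p + x))
      ((Complex.ofReal '' Iic (0:ℝ))ᶜ) ∧
    ∀ s : ℝ, 0 < s →
      Tendsto (fun ε : ℝ =>
          (∫ x in Ioi (0:ℝ), Z x / (-(s:ℂ) + ε * Complex.I + x)) -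
          ∫ x in Ioi (0:ℝ), Z x / (-(s:ℂ) - ε * Complex.I + x))
        (nhdsWithin 0 (Ioi 0))
        (nhds (-2 * Real.pi * Complex.I * Z s)) := by
  have hZfun : Z = fun x : ℝ => ∑ k, γ k * Complex.exp (lam k * x) := funext hZ
  -- continuity of Z
  have Zcont : Continuous Z := by
    rw [hZfun]
    exact continuous_finset_sum _ fun k _ =>
      continuous_const.mul ((continuous_const.mul Complex.continuous_ofReal).cexp)
  -- bound for Z on nonnegatives
  set M : ℝ := ∑ k, ‖γ k‖ with hMdef
  have hMbound : ∀ x : ℝ, 0 ≤ x → ‖Z x‖ ≤ M := by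
    intro x hx
    rw [hZ]
    refine (norm_sum_le _ _).trans ?_
    apply Finset.sum_le_sum
    intro k _
    rw [norm_mul, Complex.norm_exp]
    have hre' : (lam k * x).re = (lam k).re * x := by
      simp [Complex.mul_re]
    rw [hre']
    have : Real.exp ((lam k).re * x) ≤ 1 := by
      rw [show (1:ℝ) = Real.exp 0 by simp]
      exact Real.exp_le_exp.mpr (mul_nonpos_of_nonpos_of_nonneg (hre k).le hx)
    nlinarith [norm_nonneg (γ k), Real.exp_pos ((lam k).re * x)]
  -- integrability of Z on Ioi 0
  have Zint : IntegrableOn Z (Ioi (0:ℝ)) := by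
    rw [hZfun]
    apply integrable_finset_sum
    intro k _
    have hb : (0:ℝ) < -((lam k).re) := by linarith [hre k]
    have hint : IntegrableOn (fun x : ℝ => ‖γ k‖ * Real.exp (-(-((lam k).re)) * x))
        (Ioi (0:ℝ)) := (exp_neg_integrableOn_Ioi 0 hb).const_mul _
    refine hint.mono' ?_ ?_
    · exact (continuous_const.mul
        ((continuous_const.mul Complex.continuous_ofReal).cexp)).aestronglyMeasurable.restrict
    · filter_upwards with x
      rw [norm_mul, Complex.norm_exp]
      have hre' : (lam k * x).re = (lam k).re * x := by simp [Complex.mul_re]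
      rw [hre', neg_neg]
  constructor
  · -- Differentiability part
    intro p₀ hp₀
    have hSclosed : IsClosed (Complex.ofReal '' Iic (0:ℝ)) :=
      (Complex.isometry_ofReal.isClosedEmbedding.isClosedMap) _ isClosed_Iic
    set S := Complex.ofReal '' Iic (0:ℝ) with hS
    set δ : ℝ := Metric.infDist p₀ S with hδdef
    have hSne : S.Nonempty := ⟨0, ⟨0, self_mem_Iic, by simp⟩⟩
    have hδ : 0 < δ := (hSclosed.notMem_iff_infDist_pos hSne).mp hp₀
    have key : ∀ p ∈ Metric.ball p₀ (δ/2), ∀ x : ℝ, 0 ≤ x → δ/2 ≤ ‖p + x‖ := by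
      intro p hp x hx
      have hmem : (-(x:ℝ) : ℂ) ∈ S := ⟨-x, by simpa using hx, by simp⟩
      have h1 : Metric.infDist p S ≤ ‖p + x‖ := by
        simpa [Complex.dist_eq, sub_neg_eq_add] using
          Metric.infDist_le_dist_of_mem (x := p) hmem
      have h2 : δ ≤ Metric.infDist p S + dist p₀ p :=
        Metric.infDist_le_infDist_add_dist
      have h3 : dist p₀ p < δ/2 := by rwa [dist_comm, ← Metric.mem_ball]
      linarith
    have hp₀mem : p₀ ∈ Metric.ball p₀ (δ/2) := Metric.mem_ball_self (by linarith)
    have hne : ∀ p ∈ Metric.ball p₀ (δ/2), ∀ x : ℝ, 0 ≤ x → p + x ≠ 0 := by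
      intro p hp x hx h0
      have := key p hp x hx
      rw [h0, norm_zero] at this
      linarith
    have main := hasDerivAt_integral_of_dominated_loc_of_deriv_le
      (F := fun (p : ℂ) (x : ℝ) => Z x / (p + x))
      (F' := fun (p : ℂ) (x : ℝ) => -(Z x / (p + x)^2))
      (x₀ := p₀) (bound := fun x => ‖Z x‖ / (δ/2)^2)
      (μ := volume.restrict (Ioi (0:ℝ))) (Metric.ball_mem_nhds p₀ (by positivity : (0:ℝ) < δ/2))
      ?_ ?_ ?_ ?_ ?_ ?_
    · exact main.2.differentiableAt.differentiableWithinAt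
    · filter_upwards with p
      exact (Zcont.measurable.div
        (measurable_const.add Complex.measurable_ofReal)).aestronglyMeasurable.restrict
    · refine (Zint.norm.div_const (δ/2)).mono' ?_ ?_
      · exact (Zcont.measurable.div
          (measurable_const.add Complex.measurable_ofReal)).aestronglyMeasurable.restrict
      · filter_upwards [ae_restrict_mem measurableSet_Ioi] with x hx
        rw [norm_div]
        have hk := key p₀ hp₀mem x (le_of_lt hx)
        have h2 : (0:ℝ) < δ/2 := by positivity
        exact div_le_div_of_nonneg_left (norm_nonneg _) h2 hk
    · exact ((Zcont.measurable.div
        ((measurable_const.add Complex.measurable_ofReal).pow_const 2)).neg).aestronglyMeasurable.restrict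
    · filter_upwards [ae_restrict_mem measurableSet_Ioi] with x hx p hp
      rw [norm_neg, norm_div, norm_pow]
      have hk := key p hp x (le_of_lt hx)
      have h2 : (0:ℝ) < δ/2 := by positivity
      gcongr
    · exact Zint.norm.div_const _
    · filter_upwards [ae_restrict_mem measurableSet_Ioi] with x hx p hp
      have h1 : HasDerivAt (fun p : ℂ => p + (x:ℂ)) 1 p := (hasDerivAt_id p).add_const _
      have h2 := h1.inv (hne p hp x (le_of_lt hx))
      have h3 := h2.const_mul (Z x)
      have heq : (fun p : ℂ => Z x / (p + (x:ℂ))) = fun p : ℂ => Z x * (p + (x:ℂ))⁻¹ := by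
        funext q; rw [div_eq_mul_inv]
      rw [heq]
      convert h3 using 1
      · rfl
      · rfl
      · ring
  · -- Jump part
    intro s hs
    have hπ : (0:ℝ) < Real.pi := Real.pi_pos
    set φ : ℝ → ℝ := fun u => (Real.pi * (1 + u ^ 2))⁻¹ with hφdef
    set g : ℝ → ℂ := (Ioi (0:ℝ)).indicator Z with hgdef
    have hφ0 : ∀ x, 0 ≤ φ x := fun x => by positivity
    have hφ1 : ∫ x : ℝ, φ x = 1 := by
      simp only [hφdef, mul_inv]
      rw [MeasureTheory.integral_const_mul, integral_univ_inv_one_add_sq]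
      field_simp
    have hdecay : Tendsto (fun x : ℝ => ‖x‖ ^ Module.finrank ℝ ℝ * φ x)
        (Bornology.cobounded ℝ) (nhds 0) := by
      apply squeeze_zero' (g := fun x : ℝ => (Real.pi * ‖x‖)⁻¹)
      · filter_upwards with x
        positivity
      · filter_upwards [eventually_cobounded_le_norm 1] with x hx
        have hx0 : (0:ℝ) < ‖x‖ := lt_of_lt_of_le zero_lt_one hx
        rw [Module.finrank_self, pow_one]
        show ‖x‖ * (Real.pi * (1 + x ^ 2))⁻¹ ≤ (Real.pi * ‖x‖)⁻¹
        rw [← div_eq_mul_inv, ← one_div, div_le_div_iff₀ (by positivity) (by positivity)]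
        rw [Real.norm_eq_abs]
        nlinarith [_root_.sq_abs x, abs_nonneg x, hπ]
      · have h1 : Tendsto (fun x : ℝ => Real.pi * ‖x‖) (Bornology.cobounded ℝ) atTop :=
          (tendsto_norm_cobounded_atTop.const_mul_atTop hπ)
        exact tendsto_inv_atTop_zero.comp h1
    have hg : MeasureTheory.Integrable g :=
      (integrable_indicator_iff measurableSet_Ioi).2 Zint
    have h'g : ContinuousAt g s := by
      apply Zcont.continuousAt.congr
      filter_upwards [Ioi_mem_nhds hs] with x hx
      exact (indicator_of_mem hx Z).symm
    have peak := tendsto_integral_comp_smul_smul_of_integrable' hφ0 hφ1 hdecay hg h'g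
    have hgs : g s = Z s := indicator_of_mem hs Z
    have comp : Tendsto (fun ε : ℝ =>
        ∫ x : ℝ, ((ε⁻¹) ^ Module.finrank ℝ ℝ * φ (ε⁻¹ • (s - x))) • g x)
        (nhdsWithin 0 (Ioi 0)) (nhds (Z s)) := by
      rw [← hgs]
      exact peak.comp tendsto_inv_nhdsGT_zero
    have main : Tendsto (fun ε : ℝ => (-2 * (Real.pi:ℂ) * Complex.I) *
        ∫ x : ℝ, ((ε⁻¹) ^ Module.finrank ℝ ℝ * φ (ε⁻¹ • (s - x))) • g x)
        (nhdsWithin 0 (Ioi 0)) (nhds (-2 * Real.pi * Complex.I * Z s)) :=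
      comp.const_mul _
    apply main.congr'
    filter_upwards [self_mem_nhdsWithin] with ε (hε : ε ∈ Ioi (0:ℝ))
    rw [mem_Ioi] at hε
    -- nonvanishing denominators
    have hd1 : ∀ x : ℝ, (-(s:ℂ) + ε * Complex.I + x) ≠ 0 := by
      intro x h0
      have : (-(s:ℂ) + ε * Complex.I + x).im = ε := by simp
      rw [h0] at this
      simp at this
      linarith
    have hd2 : ∀ x : ℝ, (-(s:ℂ) - ε * Complex.I + x) ≠ 0 := by
      intro x h0
      have : (-(s:ℂ) - ε * Complex.I + x).im = -ε := by simp
      rw [h0] at this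
      simp at this
      linarith
    -- integrability of the two integrands
    have hnorm1 : ∀ x : ℝ, ε ≤ ‖(-(s:ℂ) + ε * Complex.I + x)‖ := by
      intro x
      have him : (-(s:ℂ) + ε * Complex.I + x).im = ε := by simp
      have := Complex.abs_im_le_norm (-(s:ℂ) + ε * Complex.I + x)
      rw [him] at this
      exact (le_abs_self ε).trans this
    have hnorm2 : ∀ x : ℝ, ε ≤ ‖(-(s:ℂ) - ε * Complex.I + x)‖ := by
      intro x
      have him : (-(s:ℂ) - ε * Complex.I + x).im = -ε := by simp
      have := Complex.abs_im_le_norm (-(s:ℂ) - ε * Complex.I + x)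
      rw [him, abs_neg] at this
      exact (le_abs_self ε).trans this
    have hint1 : IntegrableOn (fun x : ℝ => Z x / (-(s:ℂ) + ε * Complex.I + x)) (Ioi 0) := by
      refine (Zint.norm.mul_const ε⁻¹).mono' ?_ ?_
      · exact (Zcont.measurable.div
          (measurable_const.add Complex.measurable_ofReal)).aestronglyMeasurable.restrict
      · filter_upwards with x
        rw [norm_div, div_eq_mul_inv]
        gcongr ‖Z x‖ * ?_
        exact inv_anti₀ hε (hnorm1 x)
    have hint2 : IntegrableOn (fun x : ℝ => Z x / (-(s:ℂ) - ε * Complex.I + x)) (Ioi 0) := by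
      refine (Zint.norm.mul_const ε⁻¹).mono' ?_ ?_
      · exact (Zcont.measurable.div
          (measurable_const.add Complex.measurable_ofReal)).aestronglyMeasurable.restrict
      · filter_upwards with x
        rw [norm_div, div_eq_mul_inv]
        gcongr ‖Z x‖ * ?_
        exact inv_anti₀ hε (hnorm2 x)
    rw [← MeasureTheory.integral_sub hint1 hint2]
    -- rewrite the RHS as a set integral
    have hind : (fun x : ℝ => ((ε⁻¹) ^ Module.finrank ℝ ℝ * φ (ε⁻¹ • (s - x))) • g x)
        = (Ioi (0:ℝ)).indicator
            (fun x : ℝ => ((ε⁻¹) ^ Module.finrank ℝ ℝ * φ (ε⁻¹ • (s - x))) • Z x) := by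
      funext x
      by_cases hx : x ∈ Ioi (0:ℝ) <;> simp [hgdef, indicator, hx]
    rw [hind, MeasureTheory.integral_indicator measurableSet_Ioi,
      ← MeasureTheory.integral_const_mul]
    refine MeasureTheory.integral_congr_ae (Filter.Eventually.of_forall fun x => ?_)
    beta_reduce
    -- pointwise identity
    have hεc : (ε:ℂ) ≠ 0 := Complex.ofReal_ne_zero.mpr (ne_of_gt hε)
    have hπc : ((Real.pi:ℝ):ℂ) ≠ 0 := Complex.ofReal_ne_zero.mpr (ne_of_gt hπ)
    have hq : (0:ℝ) < (s - x) ^ 2 + ε ^ 2 := by positivity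
    have hprod : (-(s:ℂ) + ε * Complex.I + x) * (-(s:ℂ) - ε * Complex.I + x)
        = (((s - x) ^ 2 + ε ^ 2 : ℝ) : ℂ) := by
      push_cast
      linear_combination (-(ε:ℂ)^2) * Complex.I_sq
    have hsplit : Z x / (-(s:ℂ) + ε * Complex.I + x) - Z x / (-(s:ℂ) - ε * Complex.I + x)
        = Z x * (-2 * ε * Complex.I) / (((s - x) ^ 2 + ε ^ 2 : ℝ) : ℂ) := by
      rw [div_sub_div _ _ (hd1 x) (hd2 x), hprod]
      congr 1
      ring
    rw [hsplit]
    -- compute the real scalar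
    have hr : Real.pi * (ε⁻¹ ^ Module.finrank ℝ ℝ * φ (ε⁻¹ • (s - x)))
        = ε / ((s - x) ^ 2 + ε ^ 2) := by
      rw [Module.finrank_self, pow_one, hφdef, smul_eq_mul]
      field_simp
      ring
    have : (-2 * (Real.pi:ℂ) * Complex.I) *
        ((ε⁻¹ ^ Module.finrank ℝ ℝ * φ (ε⁻¹ • (s - x))) • Z x)
        = (-2 * Complex.I) * ((Real.pi * (ε⁻¹ ^ Module.finrank ℝ ℝ * φ (ε⁻¹ • (s - x))) : ℝ) : ℂ)
          * Z x := by
      rw [Complex.real_smul]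
      push_cast
      ring
    rw [this, hr]
    push_cast
    rw [div_eq_mul_inv, div_eq_mul_inv]
    ring
end

section
/- Let Z(x) = Σ_{k=1}^l γ_k e^{λ_k x} be real-valued on (0,∞) (i.e. Z(x) ∈ ℝ for all x > 0), with Re λ_k < 0. Then for every s > 0, lim_{ε→0⁺} Im ∫₀^∞ Z(x)/((-s + iε) + x) dx = -π Z(s). -/
open MeasureTheory Set Complex Filter

lemma poisson_antideriv (s ε : ℝ) (hε : 0 < ε) (x : ℝ) :
    HasDerivAt (fun y => Real.arctan ((y - s) / ε)) (ε / ((x - s) ^ 2 + ε ^ 2)) x := by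
  have h1 : HasDerivAt (fun y : ℝ => (y - s) / ε) (1 / ε) x :=
    ((hasDerivAt_id x).sub_const s).div_const ε
  have h2 := (Real.hasDerivAt_arctan ((x - s) / ε)).comp x h1
  refine h2.congr_deriv ?_
  have hd : (0:ℝ) < 1 + ((x - s) / ε) ^ 2 := by positivity
  field_simp
  ring

lemma poisson_interval (s ε a b : ℝ) (hε : 0 < ε) :
    ∫ x in a..b, ε / ((x - s) ^ 2 + ε ^ 2)
      = Real.arctan ((b - s) / ε) - Real.arctan ((a - s) / ε) := by
  apply intervalIntegral.integral_eq_sub_of_hasDerivAt (fun x _ => poisson_antideriv s ε hε x)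
  apply Continuous.intervalIntegrable
  apply continuous_const.div
  · fun_prop
  · intro x; positivity

theorem main_inversion_formula (l : ℕ) (γ lam : Fin l → ℂ)
    (hre : ∀ k, (lam k).re < 0)
    (Z : ℝ → ℂ) (hZ : ∀ x : ℝ, Z x = ∑ k, γ k * Complex.exp (lam k * x))
    (hreal : ∀ x : ℝ, 0 < x → (Z x).im = 0)
    (s : ℝ) (hs : 0 < s) :
    Tendsto (fun ε : ℝ =>
        (∫ x in Ioi (0:ℝ), Z x / ((-(s:ℂ) + ε * Complex.I) + x)).im)
      (nhdsWithin 0 (Ioi 0))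
      (nhds (-Real.pi * (Z s).re)) := by
  have hπ : (0:ℝ) < Real.pi := Real.pi_pos
  -- continuity of Z
  have hZc : Continuous Z := by
    have : Continuous fun x : ℝ => ∑ k, γ k * Complex.exp (lam k * x) := by fun_prop
    exact this.congr fun x => (hZ x).symm
  -- integrability of Z on Ioi 0
  have hZint : IntegrableOn Z (Ioi 0) := by
    rw [funext hZ]
    apply integrable_finset_sum
    intro k _
    have hb : (0:ℝ) < -(lam k).re := by linarith [hre k]
    have hint : IntegrableOn (fun x : ℝ => ‖γ k‖ * Real.exp (-(-(lam k).re) * x)) (Ioi 0) :=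
      (exp_neg_integrableOn_Ioi 0 hb).const_mul _
    refine hint.mono' ?_ ?_
    · exact (Continuous.aestronglyMeasurable (by fun_prop))
    · filter_upwards with x
      rw [norm_mul, Complex.norm_exp, neg_neg]
      apply le_of_eq
      congr 1
      simp [Complex.mul_re]
  -- peak functions
  set φ : ℝ → ℝ → ℝ := fun ε x => ε / (Real.pi * ((x - s) ^ 2 + ε ^ 2)) with hφdef
  set g : ℝ → ℝ := fun x => -Real.pi * (Z x).re with hgdef
  have key : Tendsto (fun ε : ℝ => ∫ x in Ioi (0:ℝ), φ ε x • g x)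
      (nhdsWithin 0 (Ioi 0)) (nhds (-Real.pi * (Z s).re)) := by
    apply tendsto_setIntegral_peak_smul_of_integrableOn_of_tendsto
      (μ := volume) (x₀ := s) measurableSet_Ioi (t := Ioo (s/2) (2*s)) measurableSet_Ioo
    · intro x hx
      have h1 := hx.1
      simp only [mem_Ioi]
      linarith
    · exact mem_nhdsWithin_of_mem_nhds (Ioo_mem_nhds (by linarith) (by linarith))
    · exact ((measure_Ioo_lt_top)).ne
    · filter_upwards [self_mem_nhdsWithin] with ε (hε : 0 < ε) x _
      positivity
    · intro u hu hsu
      rw [Metric.tendstoUniformlyOn_iff]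
      intro δ hδ
      obtain ⟨r, hr, hball⟩ := Metric.isOpen_iff.1 hu s hsu
      have : ∀ᶠ ε : ℝ in nhdsWithin 0 (Ioi 0), ε < δ * (Real.pi * r ^ 2) := by
        apply eventually_nhdsWithin_of_eventually_nhds
        exact eventually_lt_nhds (by positivity)
      filter_upwards [this, self_mem_nhdsWithin] with ε hε1 (hε2 : 0 < ε) x hx
      have hxr : r ≤ |x - s| := by
        by_contra h
        push_neg at h
        exact hx.2 (hball (by simpa [Real.dist_eq] using h))
      have h1 : r ^ 2 ≤ (x - s) ^ 2 := by
        calc r ^ 2 ≤ |x - s| ^ 2 := by gcongr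
        _ = (x - s)^2 := sq_abs _
      have hden : Real.pi * r ^ 2 ≤ Real.pi * ((x - s) ^ 2 + ε ^ 2) := by nlinarith
      simp only [Pi.zero_apply, dist_zero_left, Real.norm_eq_abs]
      have hφx : φ ε x = ε / (Real.pi * ((x - s) ^ 2 + ε ^ 2)) := rfl
      rw [hφx, _root_.abs_of_nonneg (by positivity)]
      calc ε / (Real.pi * ((x - s) ^ 2 + ε ^ 2)) ≤ ε / (Real.pi * r ^ 2) := by
            apply div_le_div_of_nonneg_left hε2.le (by positivity) hden
        _ < δ := (div_lt_iff₀ (by positivity)).2 (by linarith)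
    · -- integral of φ over Ioo (s/2) (2s) tends to 1
      have hcongr : ∀ᶠ ε : ℝ in nhdsWithin 0 (Ioi 0),
          ∫ x in Ioo (s/2) (2*s), φ ε x
            = (Real.arctan (s / ε) - Real.arctan ((-(s/2)) / ε)) / Real.pi := by
        filter_upwards [self_mem_nhdsWithin] with ε (hε : 0 < ε)
        have hab : s/2 ≤ 2*s := by linarith
        rw [← integral_Ioc_eq_integral_Ioo, ← intervalIntegral.integral_of_le hab]
        have : ∀ x : ℝ, φ ε x = (ε / ((x - s)^2 + ε^2)) / Real.pi := by
          intro x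
          show ε / (Real.pi * ((x - s) ^ 2 + ε ^ 2)) = _
          rw [div_div, mul_comm]
        simp_rw [this]
        rw [intervalIntegral.integral_div, poisson_interval s ε _ _ hε]
        congr 2
        · congr 1; ring
        · congr 1; ring
      rw [tendsto_congr' hcongr]
      have h1 : Tendsto (fun ε : ℝ => Real.arctan (s / ε)) (nhdsWithin 0 (Ioi 0))
          (nhds (Real.pi / 2)) := by
        have : Tendsto (fun ε : ℝ => s / ε) (nhdsWithin 0 (Ioi 0)) atTop := by
          simpa [div_eq_mul_inv] using tendsto_inv_nhdsGT_zero.const_mul_atTop hs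
        exact (Real.tendsto_arctan_atTop.mono_right nhdsWithin_le_nhds).comp this
      have h2 : Tendsto (fun ε : ℝ => Real.arctan ((-(s/2)) / ε)) (nhdsWithin 0 (Ioi 0))
          (nhds (-(Real.pi / 2))) := by
        have : Tendsto (fun ε : ℝ => (-(s/2)) / ε) (nhdsWithin 0 (Ioi 0)) atBot := by
          simp_rw [neg_div]
          apply tendsto_neg_atBot_iff.2
          exact (tendsto_inv_nhdsGT_zero.const_mul_atTop (by linarith : (0:ℝ) < s/2)).congr fun x => (div_eq_mul_inv _ _).symm
        exact (Real.tendsto_arctan_atBot.mono_right nhdsWithin_le_nhds).comp this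
      have := (h1.sub h2).div_const Real.pi
      convert this using 2
      field_simp
      norm_num
    · filter_upwards [self_mem_nhdsWithin] with ε (hε : 0 < ε)
      apply Continuous.aestronglyMeasurable
      apply continuous_const.div (by fun_prop)
      intro x; positivity
    · exact (hZint.re.const_mul (-Real.pi))
    · exact (continuous_const.mul (Complex.continuous_re.comp hZc)).continuousAt.tendsto.mono_left
        nhdsWithin_le_nhds
  -- identify the two expressions eventually
  apply key.congr'
  filter_upwards [self_mem_nhdsWithin] with ε (hε : 0 < ε)
  -- integrability of the complex integrand
  have hw : ∀ x : ℝ, ((-(s:ℂ) + ε * Complex.I) + x) ≠ 0 := by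
    intro x h
    have : ((-(s:ℂ) + ε * Complex.I) + x).im = ε := by simp
    rw [h] at this
    simp at this
    linarith
  have hfint : IntegrableOn (fun x : ℝ => Z x / ((-(s:ℂ) + ε * Complex.I) + x)) (Ioi 0) := by
    have hbound : IntegrableOn (fun x : ℝ => ‖Z x‖ * ε⁻¹) (Ioi 0) := hZint.norm.mul_const _
    refine hbound.mono' ?_ ?_
    · apply AEStronglyMeasurable.mul hZc.aestronglyMeasurable
      exact (Measurable.inv (by fun_prop)).aestronglyMeasurable
    · filter_upwards with x
      have hwlb : ε ≤ ‖(-(s:ℂ) + ε * Complex.I + x)‖ := by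
        calc ε = |((-(s:ℂ) + ε * Complex.I + x)).im| := by
              simp [abs_of_pos hε]
          _ ≤ ‖_‖ := Complex.abs_im_le_norm _
      rw [norm_div, div_eq_mul_inv]
      apply mul_le_mul_of_nonneg_left _ (norm_nonneg _)
      exact inv_anti₀ hε hwlb
  have him0 := integral_im (𝕜 := ℂ) hfint
  simp only [RCLike.im_to_complex] at him0
  rw [← him0]
  apply setIntegral_congr_fun measurableSet_Ioi
  intro x hx
  have him := hreal x hx
  have hwre : ((-(s:ℂ) + ε * Complex.I) + x).re = x - s := by simp; ring
  have hwim : ((-(s:ℂ) + ε * Complex.I) + x).im = ε := by simp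
  show φ ε x • g x = (Z x / ((-(s:ℂ) + ε * Complex.I) + x)).im
  rw [Complex.div_im, him, hwre, hwim, Complex.normSq_apply, hwre, hwim]
  show ε / (Real.pi * ((x - s) ^ 2 + ε ^ 2)) * (-Real.pi * (Z x).re) = _
  have hnsq : (0:ℝ) < (x - s) * (x - s) + ε * ε := by nlinarith [sq_nonneg (x - s)]
  rw [zero_mul, zero_div, zero_sub, div_mul_eq_mul_div, ← neg_div,
      div_eq_div_iff (by positivity) hnsq.ne']
  ring
end

section
/- Let λ ∈ ℂ with Re λ < 0. The function p ↦ ∫₀^∞ (e^{-x₁}/p) · (1/((-i x₁/p) - λ)) dx₁ is holomorphic on the sector D* = {p ∈ ℂ : -π/2 < arg p < φ₀}, where 0 < φ₀ < min(π/2, arctan(|Re λ|/|Im λ|)) (with the convention that the bound is π/2 when Im λ = 0). -/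
open MeasureTheory Set Complex

theorem F_holomorphic_on_sector (l : ℂ) (hl : l.re < 0) (φ : ℝ) (hφ0 : 0 < φ)
    (hφ1 : φ < Real.pi / 2)
    (hφ2 : l.im ≠ 0 → φ < Real.arctan (|l.re| / |l.im|)) :
    DifferentiableOn ℂ
      (fun p : ℂ => ∫ x₁ in Ioi (0:ℝ),
        (Complex.exp (-(x₁:ℂ)) / p) * (1 / ((-Complex.I * x₁ / p) - l)))
      {p : ℂ | p ≠ 0 ∧ -(Real.pi / 2) < p.arg ∧ p.arg < φ} := by
  have hπ := Real.pi_pos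
  set U : Set ℂ := {p : ℂ | 0 < p.re ∧ p.im < p.re * Real.tan φ} with hUdef
  -- the sector equals U
  have hSU : {p : ℂ | p ≠ 0 ∧ -(Real.pi / 2) < p.arg ∧ p.arg < φ} = U := by
    ext p
    simp only [mem_setOf_eq, hUdef]
    constructor
    · rintro ⟨hp0, h1, h2⟩
      have hre : 0 < p.re := by
        have : |p.arg| < Real.pi / 2 := abs_lt.2 ⟨h1, h2.trans hφ1⟩
        rcases Complex.abs_arg_lt_pi_div_two_iff.1 this with h | h
        · exact h
        · exact absurd h hp0
      refine ⟨hre, ?_⟩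
      have hm1 : p.arg ∈ Ioo (-(Real.pi/2)) (Real.pi/2) := ⟨h1, h2.trans hφ1⟩
      have hm2 : φ ∈ Ioo (-(Real.pi/2)) (Real.pi/2) := ⟨by linarith, hφ1⟩
      have := Real.strictMonoOn_tan hm1 hm2 h2
      rw [Complex.tan_arg] at this
      calc p.im = p.re * (p.im / p.re) := by field_simp
        _ < p.re * Real.tan φ := by
            exact mul_lt_mul_of_pos_left this hre
    · rintro ⟨hre, him⟩
      have hp0 : p ≠ 0 := by
        intro h; rw [h] at hre; simp at hre
      have harg : |p.arg| < Real.pi / 2 :=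
        Complex.abs_arg_lt_pi_div_two_iff.2 (Or.inl hre)
      have h1 : -(Real.pi/2) < p.arg := (abs_lt.1 harg).1
      refine ⟨hp0, h1, ?_⟩
      by_contra hc
      push_neg at hc
      have hm1 : φ ∈ Ioo (-(Real.pi/2)) (Real.pi/2) := ⟨by linarith, hφ1⟩
      have hm2 : p.arg ∈ Ioo (-(Real.pi/2)) (Real.pi/2) := ⟨h1, (abs_lt.1 harg).2⟩
      rcases eq_or_lt_of_le hc with h | h
      · rw [h, Complex.tan_arg] at him
        field_simp [hre.ne'] at him
        exact lt_irrefl _ him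
      · have := Real.strictMonoOn_tan hm1 hm2 h
        rw [Complex.tan_arg] at this
        rw [lt_div_iff₀ hre] at this
        linarith
  rw [hSU]
  have hUopen : IsOpen U :=
    (isOpen_lt continuous_const Complex.continuous_re).inter
      (isOpen_lt Complex.continuous_im (Complex.continuous_re.mul continuous_const))
  -- the forbidden closed set
  set A : Set ℂ := {z : ℂ | z.re = 0 ∧ z.im ≤ 0} with hAdef
  have hAclosed : IsClosed A :=
    (isClosed_eq Complex.continuous_re continuous_const).inter
      (isClosed_le Complex.continuous_im continuous_const)
  have hAne : A.Nonempty := ⟨0, by simp [hAdef]⟩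
  have hnotA : ∀ p ∈ U, l * p ∉ A := by
    rintro p ⟨hre, him⟩ ⟨h1, h2⟩
    rw [Complex.mul_re] at h1
    rw [Complex.mul_im] at h2
    rcases lt_trichotomy l.im 0 with hb | hb | hb
    · have htan : Real.tan φ < |l.re| / |l.im| := by
        have h := hφ2 hb.ne
        have hm1 : φ ∈ Ioo (-(Real.pi/2)) (Real.pi/2) := ⟨by linarith, hφ1⟩
        have hm2 : Real.arctan (|l.re| / |l.im|) ∈ Ioo (-(Real.pi/2)) (Real.pi/2) :=
          ⟨Real.neg_pi_div_two_lt_arctan _, Real.arctan_lt_pi_div_two _⟩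
        have := Real.strictMonoOn_tan hm1 hm2 h
        rwa [Real.tan_arctan] at this
      rw [abs_of_neg hl, abs_of_neg hb, neg_div_neg_eq] at htan
      have h4 : l.re < Real.tan φ * l.im := (lt_div_iff_of_neg hb).1 htan
      nlinarith [mul_lt_mul_of_neg_left him hb, mul_lt_mul_of_pos_right h4 hre]
    · rw [hb] at h1
      nlinarith
    · nlinarith [mul_le_mul_of_nonneg_left h2 hb.le, mul_pos (mul_pos hb hb) hre,
        mul_pos (mul_pos (neg_pos.2 hl) (neg_pos.2 hl)) hre]
  -- rewrite the integrand
  have hcongr : ∀ p ∈ U, (∫ x₁ in Ioi (0:ℝ),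
      (Complex.exp (-(x₁:ℂ)) / p) * (1 / ((-Complex.I * x₁ / p) - l)))
      = ∫ x₁ in Ioi (0:ℝ), Complex.exp (-(x₁:ℂ)) / (-Complex.I * x₁ - l * p) := by
    rintro p ⟨hre, -⟩
    have hp0 : p ≠ 0 := by intro h; rw [h] at hre; simp at hre
    refine integral_congr_ae (Filter.Eventually.of_forall fun x => ?_)
    dsimp only
    have hden : -Complex.I * x / p - l = (-Complex.I * x - l * p) / p := by
      field_simp
    rw [hden, one_div, inv_div, div_mul_div_comm, mul_comm (Complex.exp _) p,
      mul_div_mul_left _ _ hp0]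
  refine DifferentiableOn.congr ?_ hcongr
  -- main differentiability
  intro p₀ hp₀
  apply DifferentiableAt.differentiableWithinAt
  set d₀ := Metric.infDist (l * p₀) A with hd₀def
  have hd₀ : 0 < d₀ := (hAclosed.notMem_iff_infDist_pos hAne).1 (hnotA p₀ hp₀)
  set ε : ℝ := d₀ / (2 * (‖l‖ + 1)) with hεdef
  have hεpos : 0 < ε := by positivity
  set c : ℝ := d₀ / 2 with hcdef
  have hcpos : 0 < c := by positivity
  have key : ∀ p ∈ Metric.ball p₀ ε, ∀ x : ℝ, 0 ≤ x →
      c ≤ ‖-Complex.I * x - l * p‖ := by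
    intro p hp x hx
    have hmem : (-Complex.I * (x:ℂ)) ∈ A := by
      constructor <;> simp [hx]
    have h1 : Metric.infDist (l * p) A ≤ ‖-Complex.I * x - l * p‖ := by
      have := Metric.infDist_le_dist_of_mem (x := l * p) hmem
      rwa [dist_eq_norm, ← norm_neg, neg_sub] at this
    have h2 : d₀ ≤ Metric.infDist (l * p) A + dist (l * p₀) (l * p) :=
      Metric.infDist_le_infDist_add_dist
    have h3 : dist (l * p₀) (l * p) ≤ ‖l‖ * ε := by
      rw [dist_eq_norm, ← mul_sub, norm_mul]
      have : ‖p₀ - p‖ ≤ ε := by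
        rw [← dist_eq_norm, dist_comm]
        exact le_of_lt (Metric.mem_ball.1 hp)
      exact mul_le_mul_of_nonneg_left this (norm_nonneg l)
    have h4 : ‖l‖ * ε ≤ d₀ / 2 := by
      have hden : (0:ℝ) < 2*(‖l‖+1) := by positivity
      rw [hεdef, ← mul_div_assoc, div_le_div_iff₀ hden two_pos]
      nlinarith [norm_nonneg l, hd₀]
    calc c = d₀ - d₀/2 := by rw [hcdef]; ring
      _ ≤ Metric.infDist (l * p) A := by linarith
      _ ≤ _ := h1
  have hmeasF : ∀ p : ℂ, AEStronglyMeasurable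
      (fun x : ℝ => Complex.exp (-(x:ℂ)) / (-Complex.I * x - l * p))
      (volume.restrict (Ioi (0:ℝ))) := by
    intro p
    apply Measurable.aestronglyMeasurable
    fun_prop
  have hmeasF' : AEStronglyMeasurable
      (fun x : ℝ => Complex.exp (-(x:ℂ)) * l / (-Complex.I * x - l * p₀)^2)
      (volume.restrict (Ioi (0:ℝ))) := by
    apply Measurable.aestronglyMeasurable
    fun_prop
  have hexp : Integrable (fun x : ℝ => Real.exp (-x)) (volume.restrict (Ioi (0:ℝ))) := by
    have := exp_neg_integrableOn_Ioi 0 (b := 1) one_pos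
    have h2 : IntegrableOn (fun x : ℝ => Real.exp (-x)) (Ioi 0) volume := by simpa using this
    exact h2
  have hnormexp : ∀ x : ℝ, ‖Complex.exp (-(x:ℂ))‖ = Real.exp (-x) := by
    intro x
    rw [Complex.norm_exp]
    norm_num
  have hp₀ball : p₀ ∈ Metric.ball p₀ ε := Metric.mem_ball_self hεpos
  have hF_int : Integrable (fun x : ℝ => Complex.exp (-(x:ℂ)) / (-Complex.I * x - l * p₀))
      (volume.restrict (Ioi (0:ℝ))) := by
    refine (hexp.mul_const (1/c)).mono' (hmeasF p₀) ?_
    filter_upwards [ae_restrict_mem measurableSet_Ioi] with x hx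
    have hx0 : (0:ℝ) ≤ x := le_of_lt hx
    have hk := key p₀ hp₀ball x hx0
    rw [norm_div, hnormexp, mul_one_div]
    apply div_le_div_of_nonneg_left (Real.exp_pos _).le hcpos hk
  have hmain := hasDerivAt_integral_of_dominated_loc_of_deriv_le (μ := volume.restrict (Ioi (0:ℝ)))
    (F := fun (p : ℂ) (x : ℝ) => Complex.exp (-(x:ℂ)) / (-Complex.I * x - l * p))
    (F' := fun (p : ℂ) (x : ℝ) => Complex.exp (-(x:ℂ)) * l / (-Complex.I * x - l * p)^2)
    (x₀ := p₀) (bound := fun x : ℝ => Real.exp (-x) * (‖l‖ / c^2))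
    (Metric.ball_mem_nhds p₀ hεpos) (Filter.Eventually.of_forall hmeasF) hF_int hmeasF' ?_ (hexp.mul_const _) ?_
  · exact hmain.2.differentiableAt
  · -- bound
    filter_upwards [ae_restrict_mem measurableSet_Ioi] with x hx p hp
    have hk := key p hp x (le_of_lt hx)
    rw [norm_div, norm_mul, hnormexp, norm_pow, mul_div_assoc]
    apply mul_le_mul_of_nonneg_left _ (Real.exp_pos _).le
    apply div_le_div_of_nonneg_left (norm_nonneg l) (by positivity)
    exact pow_le_pow_left₀ hcpos.le hk 2
  · -- differentiability
    filter_upwards [ae_restrict_mem measurableSet_Ioi] with x hx p hp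
    have hk := key p hp x (le_of_lt hx)
    have hw : -Complex.I * x - l * p ≠ 0 := by
      intro h
      rw [h] at hk
      simp at hk
      linarith
    have h1 : HasDerivAt (fun q : ℂ => -Complex.I * (x:ℂ) - l * q) (-l) p := by
      simpa using ((hasDerivAt_id p).const_mul l).const_sub (-Complex.I * (x:ℂ))
    have h2 := (h1.inv hw).const_mul (Complex.exp (-(x:ℂ)))
    exact h2.congr_deriv (by ring)
end
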